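/- Let T be a tree and let σ be an ordering of the vertices of T satisfying Property D (so that σ is a DFS-ordering of T), with first vertex r; regard T as rooted at r, so that the parent of a non-root vertex w is its neighbor on the unique path from r to w. Let u and v be vertices with u <σ v such that every vertex strictly between u and v in σ is a leaf of T (a vertex of degree one). Then the parent of v lies on the unique path from r to u in T. -/

import Mathlib

/-- Property D for an ordering of the vertices (given as a linear order on the
vertex type) with respect to a graph `H`: the four-point characterization of
DFS-orderings. -/
def PropertyD {V : Type*} [LinearOrder V] (H : SimpleGraph V) : Prop :=
  ∀ a b c : V, a < b → b < c → H.Adj a c → ¬ H.Adj a b →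
    ∃ d : V, a < d ∧ d < b ∧ H.Adj d b

open SimpleGraph

section
variable {V : Type*} [Fintype V] [LinearOrder V] {T : SimpleGraph V}

noncomputable def thePath (hT : T.IsTree) (a b : V) : T.Walk a b :=
  (hT.existsUnique_path a b).exists.choose

lemma thePath_isPath (hT : T.IsTree) (a b : V) : (thePath hT a b).IsPath :=
  (hT.existsUnique_path a b).exists.choose_spec

lemma thePath_unique (hT : T.IsTree) {a b : V} (p : T.Walk a b) (hp : p.IsPath) :
    p = thePath hT a b :=
  (hT.existsUnique_path a b).unique hp (thePath_isPath hT a b)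

lemma cross {x : V} : ∀ {a c : V} (_ : T.Walk a c), a < x → x ≤ c →
    ∃ y z, T.Adj y z ∧ y < x ∧ x ≤ z := by
  intro a c p
  induction p with
  | nil => intro h1 h2; exact absurd (h1.trans_le h2) (lt_irrefl _)
  | @cons a b c hab p ih =>
    intro h1 h2
    rcases lt_or_ge b x with hb | hb
    · exact ih hb h2
    · exact ⟨a, b, hab, h1, hb⟩

lemma factA (hT : T.IsTree) (hD : PropertyD T) {r x : V} (hx : r < x) :
    ∃ d, d < x ∧ T.Adj d x := by
  obtain ⟨p⟩ := hT.isConnected.preconnected r x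
  obtain ⟨y, z, hyz, hy, hz⟩ := cross p hx le_rfl
  rcases eq_or_lt_of_le hz with rfl | hz
  · exact ⟨y, hy, hyz⟩
  · by_cases hyx : T.Adj y x
    · exact ⟨y, hy, hyx⟩
    · obtain ⟨d, _, hd2, hd3⟩ := hD y x z hy hz hyz hyx
      exact ⟨d, hd2, hd3⟩

lemma pen_decomp (hT : T.IsTree) {r x w : V} (hadj : T.Adj w x)
    (p : T.Walk r x) (hp : p.IsPath) (hw : w ∈ p.support) :
    p = (p.takeUntil w hw).append (Walk.cons hadj Walk.nil) := by
  have h1 : (p.dropUntil w hw) = Walk.cons hadj Walk.nil := by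
    have := thePath_unique hT _ (hp.dropUntil hw)
    have h2 : (Walk.cons hadj Walk.nil : T.Walk w x).IsPath := by
      simp [hadj.ne]
    rw [this, thePath_unique hT _ h2]
  rw [← h1, Walk.take_spec]

lemma pen_unique (hT : T.IsTree) {r x y d : V} (hy : T.Adj y x) (hd : T.Adj d x)
    (p : T.Walk r x) (hp : p.IsPath) (hyp : y ∈ p.support) (hdp : d ∈ p.support) :
    y = d := by
  have hA := pen_decomp hT hy p hp hyp
  have hB := pen_decomp hT hd p hp hdp
  set A := p.takeUntil y hyp with hAdef
  set B := p.takeUntil d hdp with hBdef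
  have hApath : A.IsPath := hp.takeUntil hyp
  have hBpath : B.IsPath := hp.takeUntil hdp
  have hlen : A.length = B.length := by
    have := hA.symm.trans hB
    have := congrArg Walk.length this
    simpa using this
  -- d ∈ A.support or d ∈ {y, x}
  have hdmem : d ∈ A.support ∨ d = y ∨ d = x := by
    have : d ∈ p.support := hdp
    rw [hA, Walk.mem_support_append_iff] at this
    rcases this with h | h
    · exact Or.inl h
    · simp only [Walk.support_cons, Walk.support_nil, List.mem_cons, List.mem_singleton] at h
      tauto
  rcases hdmem with hmem | rfl | rfl
  · -- A = (A.takeUntil d) ++ (A.dropUntil d), takeUntil = B by uniqueness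
    have htu : A.takeUntil d hmem = B := by
      rw [thePath_unique hT _ (hApath.takeUntil hmem), thePath_unique hT B hBpath]
    have hlen2 : A.length = B.length + (A.dropUntil d hmem).length := by
      conv_lhs => rw [← Walk.take_spec A hmem]
      rw [Walk.length_append, htu]
    have : (A.dropUntil d hmem).length = 0 := by omega
    exact (Walk.eq_of_length_eq_zero this).symm
  · rfl
  · exact absurd rfl hd.ne

lemma child_dichotomy (hT : T.IsTree) {r x d : V} (h : T.Adj d x)
    (p : T.Walk r x) (hp : p.IsPath) (hd : d ∉ p.support) :
    x ∈ (thePath hT r d).support := by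
  have hpath : (Walk.cons h p.reverse).reverse.IsPath := by
    rw [Walk.isPath_reverse_iff]
    rw [Walk.cons_isPath_iff]
    constructor
    · rwa [Walk.isPath_reverse_iff]
    · simpa using hd
  rw [← thePath_unique hT _ hpath]
  simp

lemma factB (hT : T.IsTree) (hD : PropertyD T) {r : V} (hfirst : ∀ x : V, r ≤ x)
    (x : V) : ∀ y, T.Adj y x → y ∈ (thePath hT r x).support → y < x := by
  induction x using WellFoundedLT.induction with
  | _ x IH =>
  intro y hadj hmem
  by_contra hlt
  have hxy : x < y := lt_of_le_of_ne (not_lt.1 hlt) hadj.ne'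
  have hxr : x ≠ r := by
    intro heq
    rw [heq] at hmem hadj
    rw [← thePath_unique hT Walk.nil Walk.IsPath.nil] at hmem
    simp at hmem
    exact T.loopless.irrefl r (hmem ▸ hadj)
  have hrx : r < x := lt_of_le_of_ne (hfirst x) (Ne.symm hxr)
  obtain ⟨d, hdx, hdadj⟩ := factA hT hD hrx
  by_cases hdmem : d ∈ (thePath hT r x).support
  · have : y = d := pen_unique hT hadj hdadj _ (thePath_isPath hT r x) hmem hdmem
    exact hlt (this ▸ hdx)
  · have hxd : x ∈ (thePath hT r d).support :=
      child_dichotomy hT hdadj _ (thePath_isPath hT r x) hdmem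
    exact absurd (IH d hdx x hdadj.symm hxd) (not_lt.2 hdx.le)

lemma lemmaL (hT : T.IsTree) (hD : PropertyD T) {r : V} (hfirst : ∀ x : V, r ≤ x)
    {v v' : V} (hadj : T.Adj v' v)
    (x : V) : v' < x → x < v → v' ∈ (thePath hT r x).support := by
  induction x using WellFoundedLT.induction with
  | _ x IH =>
  intro hv'x hxv
  by_cases hvx : T.Adj v' x
  · by_cases hmem : v' ∈ (thePath hT r x).support
    · exact hmem
    · have hxd : x ∈ (thePath hT r v').support :=
        child_dichotomy hT hvx _ (thePath_isPath hT r x) hmem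
      exact absurd (factB hT hD hfirst v' x hvx.symm hxd) (not_lt.2 hv'x.le)
  · obtain ⟨d, hv'd, hdx, hdadjx⟩ := hD v' x v hv'x hxv hadj hvx
    by_cases hdmem : d ∈ (thePath hT r x).support
    · have htu : (thePath hT r x).takeUntil d hdmem = thePath hT r d :=
        thePath_unique hT _ ((thePath_isPath hT r x).takeUntil hdmem)
      have hv'd' : v' ∈ (thePath hT r d).support :=
        IH d hdx hv'd (hdx.trans hxv)
      rw [← htu] at hv'd'
      exact Walk.support_takeUntil_subset _ hdmem hv'd'
    · have hxd : x ∈ (thePath hT r d).support :=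
        child_dichotomy hT hdadjx _ (thePath_isPath hT r x) hdmem
      exact absurd (factB hT hD hfirst d x hdadjx.symm hxd) (not_lt.2 hdx.le)

end

/-- Let `T` be a tree and `σ` a DFS-ordering of `T` (satisfying Property D) with
first vertex `r`.  Let `u <σ v` be vertices such that every vertex strictly
between `u` and `v` in `σ` is a leaf of `T` (has exactly one neighbor).  If `v'`
is the parent of `v` when `T` is rooted at `r` (i.e. `v'` is adjacent to `v` and
lies on the unique path from `r` to `v`), then `v'` lies on the unique path from
`r` to `u` in `T`. -/
theorem stmt3 {V : Type*} [Fintype V] [LinearOrder V] (T : SimpleGraph V)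
    (hT : T.IsTree) (hD : PropertyD T)
    (r : V) (hfirst : ∀ x : V, r ≤ x)
    (u v : V) (huv : u < v)
    (hleaves : ∀ x : V, u < x → x < v → ∃! y : V, T.Adj x y)
    (v' : V) (hv'adj : T.Adj v' v)
    (hv'path : ∀ p : T.Walk r v, p.IsPath → v' ∈ p.support)
    (q : T.Walk r u) (hq : q.IsPath) :
    v' ∈ q.support := by
  have hpq : q = thePath hT r u := thePath_unique hT q hq
  have hv'mem : v' ∈ (thePath hT r v).support := hv'path _ (thePath_isPath hT r v)
  have hv'v : v' < v := factB hT hD hfirst v v' hv'adj hv'mem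
  rcases lt_trichotomy v' u with h | rfl | h
  · rw [hpq]
    exact lemmaL hT hD hfirst hv'adj u h huv
  · exact q.end_mem_support
  · -- v' is a leaf, contradiction
    have hrv' : r < v' := lt_of_le_of_lt (hfirst u) h
    obtain ⟨w, hwv', hwadj⟩ := factA hT hD hrv'
    obtain ⟨y, _, hy⟩ := hleaves v' h hv'v
    have h1 : v = y := hy v hv'adj
    have h2 : w = y := hy w hwadj.symm
    exact absurd (h2.trans h1.symm) (ne_of_lt (hwv'.trans hv'v))
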